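/- arXiv:2505.02605 — 2 statements merged into one kernel-verified Lean document; each statement's English description precedes it below -/
import Mathlib

section
/- The cycle graph C_t on t ≥ 3 vertices is unmixed (all maximal independent sets of C_t have the same cardinality) if and only if t ∈ {3, 4, 5, 7}. -/
/-- `A` is an independent set of the simple graph `G`. -/
def IsIndep {V : Type*} (G : SimpleGraph V) (A : Set V) : Prop :=
  ∀ a ∈ A, ∀ b ∈ A, ¬ G.Adj a b

/-- `A` is a maximal independent set of `G`. -/
def IsMaxIndep {V : Type*} (G : SimpleGraph V) (A : Set V) : Prop :=
  IsIndep G A ∧ ∀ B : Set V, IsIndep G B → A ⊆ B → B = A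

/-- `G` is unmixed: all maximal independent sets have the same cardinality. -/
def Unmixed {V : Type*} (G : SimpleGraph V) : Prop :=
  ∀ A B : Set V, IsMaxIndep G A → IsMaxIndep G B → A.ncard = B.ncard


lemma add_one_val {t : ℕ} [NeZero t] (ht : 2 ≤ t) (v : Fin t) :
    (v + 1).val = if v.val + 1 = t then 0 else v.val + 1 := by
  rw [Fin.val_add, Fin.val_one']
  rw [Nat.mod_eq_of_lt (show 1 < t by omega)]
  split_ifs with h
  · simp [h]
  · exact Nat.mod_eq_of_lt (by omega)

lemma cg_adj_eq {t : ℕ} [NeZero t] (ht : 2 ≤ t) (u v : Fin t) :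
    (SimpleGraph.cycleGraph t).Adj u v ↔ u = v + 1 ∨ v = u + 1 := by
  rw [SimpleGraph.cycleGraph_adj']
  have h1 : (1 : Fin t).val = 1 := by
    rw [Fin.val_one']; exact Nat.mod_eq_of_lt (by omega)
  constructor
  · rintro (h | h)
    · left
      have h2 : u - v = 1 := by rw [Fin.ext_iff, h1]; exact h
      rw [sub_eq_iff_eq_add] at h2; rw [h2, add_comm]
    · right
      have h2 : v - u = 1 := by rw [Fin.ext_iff, h1]; exact h
      rw [sub_eq_iff_eq_add] at h2; rw [h2, add_comm]
  · rintro (h | h)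
    · left; rw [h, add_sub_cancel_left]; exact h1
    · right; rw [h, add_sub_cancel_left]; exact h1

lemma cg_adj_nat {t : ℕ} [NeZero t] (ht : 3 ≤ t) (a b : Fin t) :
    (SimpleGraph.cycleGraph t).Adj a b ↔
      (a.val + 1 = b.val ∨ b.val + 1 = a.val ∨ (a.val + 1 = t ∧ b.val = 0) ∨
        (b.val + 1 = t ∧ a.val = 0)) := by
  have h1 := a.isLt; have h2 := b.isLt
  rw [cg_adj_eq (by omega) a b, Fin.ext_iff, Fin.ext_iff,
    add_one_val (by omega) a, add_one_val (by omega) b]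
  split_ifs <;> omega


lemma isMaxIndep_of_dom {V : Type*} {G : SimpleGraph V} {A : Set V}
    (h1 : IsIndep G A) (h2 : ∀ b ∉ A, ∃ a ∈ A, G.Adj a b) : IsMaxIndep G A := by
  refine ⟨h1, fun B hB hAB => ?_⟩
  refine Set.Subset.antisymm (fun b hb => ?_) hAB
  by_contra hbA
  obtain ⟨a, haA, hadj⟩ := h2 b hbA
  exact hB a (hAB haA) b hb hadj

lemma dom_of_maxIndep {V : Type*} {G : SimpleGraph V} {A : Set V}
    (h : IsMaxIndep G A) : ∀ b ∉ A, ∃ a ∈ A, G.Adj a b := by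
  intro b hb
  by_contra hc
  push_neg at hc
  have hind : IsIndep G (insert b A) := by
    intro x hx y hy
    rcases hx with rfl | hx <;> rcases hy with rfl | hy
    · simp
    · exact fun hadj => hc y hy hadj.symm
    · exact fun hadj => hc x hx hadj
    · exact h.1 x hx y hy
  have h3 := h.2 _ hind (Set.subset_insert b A)
  exact hb (h3 ▸ Set.mem_insert b A)

lemma unmixed_of_card {V : Type*} [Fintype V] [DecidableEq V] {G : SimpleGraph V} {k : ℕ}
    (h : ∀ A : Finset V, (∀ a ∈ A, ∀ b ∈ A, ¬ G.Adj a b) →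
      (∀ b : V, b ∉ A → ∃ a ∈ A, G.Adj a b) → A.card = k) : Unmixed G := by
  have key : ∀ A : Set V, IsMaxIndep G A → A.ncard = k := by
    intro A hA
    have hfin : A.Finite := Set.toFinite A
    have hmem : ∀ x, x ∈ hfin.toFinset ↔ x ∈ A := fun x => hfin.mem_toFinset
    rw [Set.ncard_eq_toFinset_card A hfin]
    apply h
    · intro a ha b hb
      exact hA.1 a ((hmem a).1 ha) b ((hmem b).1 hb)
    · intro b hb
      obtain ⟨a, ha, hadj⟩ := dom_of_maxIndep hA b (fun hbA => hb ((hmem b).2 hbA))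
      exact ⟨a, (hmem a).2 ha, hadj⟩
  intro A B hA hB
  rw [key A hA, key B hB]

lemma mem_mk {t m : ℕ} (g : ℕ → ℕ) (hg : ∀ k, g k < t) (x : Fin t) :
    (x ∈ (fun k : Fin m => (⟨g k.val, hg _⟩ : Fin t)) '' Set.univ) ↔
      ∃ k, k < m ∧ g k = x.val := by
  simp only [Set.image_univ, Set.mem_range, Fin.ext_iff]
  constructor
  · rintro ⟨k, hk⟩; exact ⟨k.val, k.isLt, hk⟩
  · rintro ⟨k, hk, hgk⟩; exact ⟨⟨k, hk⟩, hgk⟩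

lemma ncard_mk {t m : ℕ} (g : ℕ → ℕ) (hg : ∀ k, g k < t)
    (hinj : ∀ k1, k1 < m → ∀ k2, k2 < m → g k1 = g k2 → k1 = k2) :
    ((fun k : Fin m => (⟨g k.val, hg _⟩ : Fin t)) '' Set.univ).ncard = m := by
  rw [Set.ncard_image_of_injective _ (fun k1 k2 hk => by
    apply Fin.ext
    exact hinj k1.val k1.isLt k2.val k2.isLt (by simpa [Fin.ext_iff] using hk))]
  simp [Set.ncard_univ]

set_option maxRecDepth 100000 in
lemma card_d3 : ∀ A : Finset (Fin 3), (∀ a ∈ A, ∀ b ∈ A, ¬ (SimpleGraph.cycleGraph 3).Adj a b) →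
    (∀ b : Fin 3, b ∉ A → ∃ a ∈ A, (SimpleGraph.cycleGraph 3).Adj a b) → A.card = 1 := by decide

set_option maxRecDepth 100000 in
lemma card_d4 : ∀ A : Finset (Fin 4), (∀ a ∈ A, ∀ b ∈ A, ¬ (SimpleGraph.cycleGraph 4).Adj a b) →
    (∀ b : Fin 4, b ∉ A → ∃ a ∈ A, (SimpleGraph.cycleGraph 4).Adj a b) → A.card = 2 := by decide

set_option maxRecDepth 100000 in
lemma card_d5 : ∀ A : Finset (Fin 5), (∀ a ∈ A, ∀ b ∈ A, ¬ (SimpleGraph.cycleGraph 5).Adj a b) →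
    (∀ b : Fin 5, b ∉ A → ∃ a ∈ A, (SimpleGraph.cycleGraph 5).Adj a b) → A.card = 2 := by decide

set_option maxRecDepth 100000 in
lemma card_d7 : ∀ A : Finset (Fin 7), (∀ a ∈ A, ∀ b ∈ A, ¬ (SimpleGraph.cycleGraph 7).Adj a b) →
    (∀ b : Fin 7, b ∉ A → ∃ a ∈ A, (SimpleGraph.cycleGraph 7).Adj a b) → A.card = 3 := by decide

/-- evens `0, 2, …, 2(m-1)` -/
def gEven (m : ℕ) : ℕ → ℕ := fun k => if k < m then 2 * k else 0

/-- `0, 2, …, 2(m-3), t-3` -/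
def gEvenGap (t m : ℕ) : ℕ → ℕ := fun k => if k < m - 2 then 2 * k else t - 3

lemma not_unmixed_even (t m : ℕ) (hm : 3 ≤ m) (ht : t = 2 * m) :
    ¬ Unmixed (SimpleGraph.cycleGraph t) := by
  intro hU
  have ht3 : 3 ≤ t := by omega
  haveI : NeZero t := ⟨by omega⟩
  -- the big maximal independent set: all evens
  have hg1 : ∀ k, gEven m k < t := by
    intro k; simp only [gEven]; split_ifs <;> omega
  set A1 : Set (Fin t) := (fun k : Fin m => (⟨gEven m k.val, hg1 _⟩ : Fin t)) '' Set.univ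
    with hA1def
  have hmem1 : ∀ x : Fin t, x ∈ A1 ↔ ∃ k, k < m ∧ 2 * k = x.val := by
    intro x
    rw [hA1def, mem_mk]
    refine exists_congr fun k => and_congr_right fun hk => ?_
    simp only [gEven, if_pos hk]
  have hind1 : IsIndep (SimpleGraph.cycleGraph t) A1 := by
    intro a ha b hb
    rw [hmem1] at ha hb
    obtain ⟨k1, hk1, he1⟩ := ha
    obtain ⟨k2, hk2, he2⟩ := hb
    rw [cg_adj_nat ht3]
    omega
  have hdom1 : ∀ b ∉ A1, ∃ a ∈ A1, (SimpleGraph.cycleGraph t).Adj a b := by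
    intro b hb
    rw [hmem1] at hb
    push_neg at hb
    have hbv := b.isLt
    have hodd : b.val % 2 = 1 := by
      by_contra h
      exact hb (b.val / 2) (by omega) (by omega)
    refine ⟨⟨b.val - 1, by omega⟩, ?_, ?_⟩
    · rw [hmem1]; exact ⟨(b.val - 1) / 2, by omega, by simp only; omega⟩
    · rw [cg_adj_nat ht3]; left; simp only; omega
  have hc1 : A1.ncard = m := by
    rw [hA1def, ncard_mk]
    intro k1 h1 k2 h2 heq
    simp only [gEven, if_pos h1, if_pos h2] at heq
    omega
  -- the small maximal independent set
  have hg2 : ∀ k, gEvenGap t m k < t := by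
    intro k; simp only [gEvenGap]; split_ifs <;> omega
  set A2 : Set (Fin t) := (fun k : Fin (m - 1) => (⟨gEvenGap t m k.val, hg2 _⟩ : Fin t)) '' Set.univ
    with hA2def
  have hval2 : ∀ k, k < m - 1 → (gEvenGap t m k = 2 * k ∧ k < m - 2) ∨ (gEvenGap t m k = t - 3 ∧ m - 2 ≤ k) := by
    intro k hk
    by_cases h : k < m - 2
    · exact Or.inl ⟨if_pos h, h⟩
    · exact Or.inr ⟨if_neg h, by omega⟩
  have hmem2 : ∀ x : Fin t, x ∈ A2 ↔ ∃ k, k < m - 1 ∧ gEvenGap t m k = x.val := by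
    intro x; rw [hA2def, mem_mk]
  have hind2 : IsIndep (SimpleGraph.cycleGraph t) A2 := by
    intro a ha b hb
    rw [hmem2] at ha hb
    obtain ⟨k1, hk1, he1⟩ := ha
    obtain ⟨k2, hk2, he2⟩ := hb
    rw [cg_adj_nat ht3]
    rcases hval2 k1 hk1 with ⟨e1, l1⟩ | ⟨e1, l1⟩ <;> rcases hval2 k2 hk2 with ⟨e2, l2⟩ | ⟨e2, l2⟩ <;> omega
  have hdom2 : ∀ b ∉ A2, ∃ a ∈ A2, (SimpleGraph.cycleGraph t).Adj a b := by
    intro b hb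
    rw [hmem2] at hb
    push_neg at hb
    have hbv := b.isLt
    have h1 : b.val ≠ t - 3 := by
      intro h
      exact hb (m - 2) (by omega) (by simp only [gEvenGap]; rw [if_neg (by omega)]; omega)
    have h2 : ¬(b.val % 2 = 0 ∧ b.val ≤ t - 6) := by
      rintro ⟨he, hle⟩
      exact hb (b.val / 2) (by omega)
        (by simp only [gEvenGap]; rw [if_pos (by omega)]; omega)
    have hcases : (b.val % 2 = 1 ∧ b.val + 5 ≤ t) ∨ b.val = t - 1 ∨ b.val = t - 2 ∨
        b.val = t - 4 := by omega
    rcases hcases with ⟨ho, hle⟩ | hb1 | hb1 | hb1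
    · refine ⟨⟨b.val - 1, by omega⟩, ?_, ?_⟩
      · rw [hmem2]
        exact ⟨(b.val - 1) / 2, by omega,
          by simp only [gEvenGap]; rw [if_pos (by omega)]; omega⟩
      · rw [cg_adj_nat ht3]; left; simp only; omega
    · refine ⟨⟨0, by omega⟩, ?_, ?_⟩
      · rw [hmem2]
        exact ⟨0, by omega, by simp only [gEvenGap]; rw [if_pos (by omega)]⟩
      · rw [cg_adj_nat ht3]
        right; right; right
        exact ⟨by omega, rfl⟩
    · refine ⟨⟨t - 3, by omega⟩, ?_, ?_⟩
      · rw [hmem2]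
        exact ⟨m - 2, by omega, by simp only [gEvenGap]; rw [if_neg (by omega)]⟩
      · rw [cg_adj_nat ht3]; left; simp only; omega
    · refine ⟨⟨t - 3, by omega⟩, ?_, ?_⟩
      · rw [hmem2]
        exact ⟨m - 2, by omega, by simp only [gEvenGap]; rw [if_neg (by omega)]⟩
      · rw [cg_adj_nat ht3]; right; left; simp only; omega
  have hc2 : A2.ncard = m - 1 := by
    rw [hA2def, ncard_mk]
    intro k1 h1 k2 h2 heq
    rcases hval2 k1 h1 with ⟨e1, l1⟩ | ⟨e1, l1⟩ <;> rcases hval2 k2 h2 with ⟨e2, l2⟩ | ⟨e2, l2⟩ <;> omega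
  have hfin := hU A1 A2 (isMaxIndep_of_dom hind1 hdom1) (isMaxIndep_of_dom hind2 hdom2)
  rw [hc1, hc2] at hfin
  omega


/-- `0, 2, …, 2(m-4), t-6, t-3` -/
def gOddGap (t m : ℕ) : ℕ → ℕ :=
  fun k => if k < m - 3 then 2 * k else if k = m - 3 then t - 6 else t - 3

lemma not_unmixed_odd (t m : ℕ) (hm : 4 ≤ m) (ht : t = 2 * m + 1) :
    ¬ Unmixed (SimpleGraph.cycleGraph t) := by
  intro hU
  have ht3 : 3 ≤ t := by omega
  haveI : NeZero t := ⟨by omega⟩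
  -- the big maximal independent set: evens 0,…,t-3
  have hg1 : ∀ k, gEven m k < t := by
    intro k; simp only [gEven]; split_ifs <;> omega
  set A1 : Set (Fin t) := (fun k : Fin m => (⟨gEven m k.val, hg1 _⟩ : Fin t)) '' Set.univ
    with hA1def
  have hmem1 : ∀ x : Fin t, x ∈ A1 ↔ ∃ k, k < m ∧ 2 * k = x.val := by
    intro x
    rw [hA1def, mem_mk]
    refine exists_congr fun k => and_congr_right fun hk => ?_
    simp only [gEven, if_pos hk]
  have hind1 : IsIndep (SimpleGraph.cycleGraph t) A1 := by
    intro a ha b hb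
    rw [hmem1] at ha hb
    obtain ⟨k1, hk1, he1⟩ := ha
    obtain ⟨k2, hk2, he2⟩ := hb
    rw [cg_adj_nat ht3]
    omega
  have hdom1 : ∀ b ∉ A1, ∃ a ∈ A1, (SimpleGraph.cycleGraph t).Adj a b := by
    intro b hb
    rw [hmem1] at hb
    push_neg at hb
    have hbv := b.isLt
    have hcase : b.val % 2 = 1 ∨ b.val = t - 1 := by
      by_contra h
      push_neg at h
      exact hb (b.val / 2) (by omega) (by omega)
    rcases hcase with ho | hb1
    · refine ⟨⟨b.val - 1, by omega⟩, ?_, ?_⟩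
      · rw [hmem1]; exact ⟨(b.val - 1) / 2, by omega, by simp only [Fin.val_mk]; omega⟩
      · rw [cg_adj_nat ht3]; simp only [Fin.val_mk]; omega
    · refine ⟨⟨0, by omega⟩, ?_, ?_⟩
      · rw [hmem1]; exact ⟨0, by omega, rfl⟩
      · rw [cg_adj_nat ht3]; right; right; right; exact ⟨by omega, rfl⟩
  have hc1 : A1.ncard = m := by
    rw [hA1def, ncard_mk]
    intro k1 h1 k2 h2 heq
    simp only [gEven, if_pos h1, if_pos h2] at heq
    omega
  -- the small maximal independent set
  have hg2 : ∀ k, gOddGap t m k < t := by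
    intro k; simp only [gOddGap]; split_ifs <;> omega
  set A2 : Set (Fin t) := (fun k : Fin (m - 1) => (⟨gOddGap t m k.val, hg2 _⟩ : Fin t)) '' Set.univ
    with hA2def
  have hval2 : ∀ k, k < m - 1 → (gOddGap t m k = 2 * k ∧ k < m - 3) ∨
      (gOddGap t m k = t - 6 ∧ k = m - 3) ∨ (gOddGap t m k = t - 3 ∧ k = m - 2) := by
    intro k hk
    simp only [gOddGap]
    split_ifs with h h2
    · exact Or.inl ⟨rfl, h⟩
    · exact Or.inr (Or.inl ⟨rfl, h2⟩)
    · exact Or.inr (Or.inr ⟨rfl, by omega⟩)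
  have hmem2 : ∀ x : Fin t, x ∈ A2 ↔ ∃ k, k < m - 1 ∧ gOddGap t m k = x.val := by
    intro x; rw [hA2def, mem_mk]
  have hind2 : IsIndep (SimpleGraph.cycleGraph t) A2 := by
    intro a ha b hb
    rw [hmem2] at ha hb
    obtain ⟨k1, hk1, he1⟩ := ha
    obtain ⟨k2, hk2, he2⟩ := hb
    rw [cg_adj_nat ht3]
    rcases hval2 k1 hk1 with ⟨e1, l1⟩ | ⟨e1, l1⟩ | ⟨e1, l1⟩ <;>
      rcases hval2 k2 hk2 with ⟨e2, l2⟩ | ⟨e2, l2⟩ | ⟨e2, l2⟩ <;> omega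
  have hdom2 : ∀ b ∉ A2, ∃ a ∈ A2, (SimpleGraph.cycleGraph t).Adj a b := by
    intro b hb
    rw [hmem2] at hb
    push_neg at hb
    have hbv := b.isLt
    have h1 : b.val ≠ t - 3 := by
      intro h
      exact hb (m - 2) (by omega) (by simp only [gOddGap]; split_ifs <;> omega)
    have h2 : b.val ≠ t - 6 := by
      intro h
      exact hb (m - 3) (by omega) (by simp only [gOddGap]; split_ifs <;> omega)
    have h3 : ¬(b.val % 2 = 0 ∧ b.val ≤ t - 9) := by
      rintro ⟨he, hle⟩
      exact hb (b.val / 2) (by omega) (by simp only [gOddGap]; split_ifs <;> omega)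
    have hcases : (b.val % 2 = 1 ∧ b.val + 8 ≤ t) ∨ b.val = t - 7 ∨ b.val = t - 5 ∨
        b.val = t - 4 ∨ b.val = t - 2 ∨ b.val = t - 1 := by omega
    have hw : ∃ v : ℕ, v < t ∧ (∃ k, k < m - 1 ∧ gOddGap t m k = v) ∧
        (v + 1 = b.val ∨ b.val + 1 = v ∨ (v + 1 = t ∧ b.val = 0) ∨
          (b.val + 1 = t ∧ v = 0)) := by
      rcases hcases with ⟨ho, hle⟩ | hb1 | hb1 | hb1 | hb1 | hb1
      · exact ⟨b.val - 1, by omega,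
          ⟨(b.val - 1) / 2, by omega, by simp only [gOddGap]; split_ifs <;> omega⟩, by omega⟩
      · exact ⟨t - 6, by omega,
          ⟨m - 3, by omega, by simp only [gOddGap]; split_ifs <;> omega⟩, by omega⟩
      · exact ⟨t - 6, by omega,
          ⟨m - 3, by omega, by simp only [gOddGap]; split_ifs <;> omega⟩, by omega⟩
      · exact ⟨t - 3, by omega,
          ⟨m - 2, by omega, by simp only [gOddGap]; split_ifs <;> omega⟩, by omega⟩
      · exact ⟨t - 3, by omega,
          ⟨m - 2, by omega, by simp only [gOddGap]; split_ifs <;> omega⟩, by omega⟩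
      · exact ⟨0, by omega,
          ⟨0, by omega, by simp only [gOddGap]; split_ifs <;> omega⟩, by omega⟩
    obtain ⟨v, hv, hmem, hadj⟩ := hw
    refine ⟨⟨v, hv⟩, ?_, ?_⟩
    · rw [hmem2]; exact hmem
    · rw [cg_adj_nat ht3]; simp only [Fin.val_mk]; exact hadj
  have hc2 : A2.ncard = m - 1 := by
    rw [hA2def, ncard_mk]
    intro k1 h1 k2 h2 heq
    rcases hval2 k1 h1 with ⟨e1, l1⟩ | ⟨e1, l1⟩ | ⟨e1, l1⟩ <;>
      rcases hval2 k2 h2 with ⟨e2, l2⟩ | ⟨e2, l2⟩ | ⟨e2, l2⟩ <;> omega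
  have hfin := hU A1 A2 (isMaxIndep_of_dom hind1 hdom1) (isMaxIndep_of_dom hind2 hdom2)
  rw [hc1, hc2] at hfin
  omega

/-- The cycle `C_t` (`t ≥ 3`) is unmixed if and only if `t ∈ {3,4,5,7}`. -/
theorem cycle_unmixed_iff (t : ℕ) (ht : 3 ≤ t) :
    Unmixed (SimpleGraph.cycleGraph t) ↔ t ∈ ({3, 4, 5, 7} : Set ℕ) := by
  constructor
  · intro hU
    by_contra hmem
    simp only [Set.mem_insert_iff, Set.mem_singleton_iff, not_or] at hmem
    obtain ⟨h3, h4, h5, h7⟩ := hmem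
    rcases Nat.even_or_odd t with ⟨m, hm⟩ | ⟨m, hm⟩
    · exact not_unmixed_even t m (by omega) (by omega) hU
    · exact not_unmixed_odd t m (by omega) (by omega) hU
  · intro hmem
    simp only [Set.mem_insert_iff, Set.mem_singleton_iff] at hmem
    rcases hmem with rfl | rfl | rfl | rfl
    · exact unmixed_of_card card_d3
    · exact unmixed_of_card card_d4
    · exact unmixed_of_card card_d5
    · exact unmixed_of_card card_d7
end

section
/- Let t ≥ 3 and suppose the cycle C_t is unmixed and triangle-free. Then t ∈ {4, 5, 7}. -/
lemma cyc_adj {t : ℕ} (ht : 3 ≤ t) (u v : Fin t) :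
    (SimpleGraph.cycleGraph t).Adj u v ↔
      (u.val + 1) % t = v.val ∨ (v.val + 1) % t = u.val := by
  obtain ⟨n, rfl⟩ : ∃ n, t = n + 2 := ⟨t - 2, by omega⟩
  rw [SimpleGraph.cycleGraph_adj]
  constructor
  · rintro (h | h)
    · right
      rw [sub_eq_iff_eq_add] at h
      rw [h, add_comm]
      simp [Fin.add_def]
    · left
      rw [sub_eq_iff_eq_add] at h
      rw [h, add_comm]
      simp [Fin.add_def]
  · rintro (h | h)
    · right
      rw [sub_eq_iff_eq_add]
      apply Fin.ext
      simp only [Fin.add_def, Fin.val_one]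
      rw [Nat.add_comm 1 _]
      exact h.symm
    · left
      rw [sub_eq_iff_eq_add]
      apply Fin.ext
      simp only [Fin.add_def, Fin.val_one]
      rw [Nat.add_comm 1 _]
      exact h.symm

lemma succ_mod_cases {a t : ℕ} (h : a < t) :
    ((a + 1) % t = a + 1 ∧ a + 1 < t) ∨ ((a + 1) % t = 0 ∧ a + 1 = t) := by
  rcases Nat.lt_or_ge (a + 1) t with h' | h'
  · exact Or.inl ⟨Nat.mod_eq_of_lt h', h'⟩
  · have : a + 1 = t := by omega
    exact Or.inr ⟨by rw [this, Nat.mod_self], this⟩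

lemma ncard_range_fin {t k : ℕ} (f : Fin k → Fin t) (hf : Function.Injective f) :
    (Set.range f).ncard = k := by
  rw [← Set.image_univ, Set.ncard_image_of_injective _ hf, Set.ncard_univ,
    Nat.card_eq_fintype_card, Fintype.card_fin]

lemma maxIndep_of {V : Type*} (G : SimpleGraph V) (A : Set V)
    (h1 : IsIndep G A) (h2 : ∀ v ∉ A, ∃ w ∈ A, G.Adj v w) : IsMaxIndep G A := by
  refine ⟨h1, fun B hB hAB => ?_⟩
  ext v
  refine ⟨fun hv => ?_, fun hv => hAB hv⟩
  by_contra hvA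
  obtain ⟨w, hwA, hvw⟩ := h2 v hvA
  exact hB v hv w (hAB hwA) hvw

lemma bigIndep (t : ℕ) (ht : 3 ≤ t) :
    ∃ A : Set (Fin t), IsMaxIndep (SimpleGraph.cycleGraph t) A ∧ A.ncard = t / 2 := by
  refine ⟨Set.range (fun i : Fin (t / 2) => (⟨2 * i.val, by have := i.isLt; omega⟩ : Fin t)),
    ?_, ?_⟩
  · have hmem : ∀ v : Fin t,
        (v ∈ Set.range (fun i : Fin (t / 2) => (⟨2 * i.val, by have := i.isLt; omega⟩ : Fin t)))
        ↔ (v.val % 2 = 0 ∧ v.val < 2 * (t / 2)) := by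
      intro v
      constructor
      · rintro ⟨i, rfl⟩
        have := i.isLt
        constructor <;> simp <;> omega
      · rintro ⟨h1, h2⟩
        exact ⟨⟨v.val / 2, by omega⟩, by apply Fin.ext; simp; omega⟩
    apply maxIndep_of
    · intro a ha b hb hadj
      rw [hmem] at ha hb
      rw [cyc_adj ht] at hadj
      have ha2 := a.isLt
      have hb2 := b.isLt
      rcases hadj with h | h
      · rcases succ_mod_cases ha2 with ⟨h1, h2⟩ | ⟨h1, h2⟩ <;> omega
      · rcases succ_mod_cases hb2 with ⟨h1, h2⟩ | ⟨h1, h2⟩ <;> omega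
    · intro v hv
      rw [hmem] at hv
      push_neg at hv
      have hvlt := v.isLt
      by_cases hodd : v.val % 2 = 1
      · refine ⟨⟨v.val - 1, by omega⟩, ?_, ?_⟩
        · rw [hmem]
          show (v.val - 1) % 2 = 0 ∧ v.val - 1 < 2 * (t / 2)
          omega
        · rw [cyc_adj ht]
          right
          show (v.val - 1 + 1) % t = v.val
          have e : v.val - 1 + 1 = v.val := by omega
          rw [e, Nat.mod_eq_of_lt hvlt]
      · have hv0 : v.val % 2 = 0 := by omega
        have hge := hv hv0
        refine ⟨⟨0, by omega⟩, ?_, ?_⟩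
        · rw [hmem]
          show 0 % 2 = 0 ∧ 0 < 2 * (t / 2)
          omega
        · rw [cyc_adj ht]
          left
          show (v.val + 1) % t = 0
          have e : v.val + 1 = t := by omega
          rw [e, Nat.mod_self]
  · apply ncard_range_fin
    intro i j hij
    have h2 : 2 * i.val = 2 * j.val := congrArg Fin.val hij
    exact Fin.ext (by omega)

lemma smallIndep (t : ℕ) (ht : 6 ≤ t) :
    ∃ B : Set (Fin t), IsMaxIndep (SimpleGraph.cycleGraph t) B ∧ B.ncard = (t + 2) / 3 := by
  by_cases hr : t % 3 = 1
  · -- t ≡ 1 mod 3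
    refine ⟨Set.range (fun i : Fin ((t + 2) / 3) =>
      (⟨if i.val + 1 = (t + 2) / 3 then t - 2 else 3 * i.val,
        by have := i.isLt; split <;> omega⟩ : Fin t)), ?_, ?_⟩
    · have hmem : ∀ v : Fin t,
          (v ∈ Set.range (fun i : Fin ((t + 2) / 3) =>
            (⟨if i.val + 1 = (t + 2) / 3 then t - 2 else 3 * i.val,
              by have := i.isLt; split <;> omega⟩ : Fin t)))
          ↔ ((v.val % 3 = 0 ∧ v.val + 1 < t) ∨ v.val = t - 2) := by
        intro v
        constructor
        · rintro ⟨i, rfl⟩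
          have := i.isLt
          by_cases hc : i.val + 1 = (t + 2) / 3 <;> simp [hc] <;> omega
        · rintro (⟨h1, h2⟩ | h)
          · refine ⟨⟨v.val / 3, by omega⟩, Fin.ext ?_⟩
            show (if v.val / 3 + 1 = (t + 2) / 3 then t - 2 else 3 * (v.val / 3)) = v.val
            rw [if_neg (by omega)]
            omega
          · refine ⟨⟨(t + 2) / 3 - 1, by omega⟩, Fin.ext ?_⟩
            show (if (t + 2) / 3 - 1 + 1 = (t + 2) / 3 then t - 2 else _) = v.val
            rw [if_pos (by omega)]
            omega
      apply maxIndep_of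
      · intro a ha b hb hadj
        rw [hmem] at ha hb
        rw [cyc_adj (by omega)] at hadj
        have ha2 := a.isLt
        have hb2 := b.isLt
        rcases hadj with h | h
        · rcases succ_mod_cases ha2 with ⟨h1, h2⟩ | ⟨h1, h2⟩ <;> omega
        · rcases succ_mod_cases hb2 with ⟨h1, h2⟩ | ⟨h1, h2⟩ <;> omega
      · intro v hv
        rw [hmem] at hv
        push_neg at hv
        have hvlt := v.isLt
        rcases hv with ⟨hv1, hv2⟩
        by_cases h1 : v.val % 3 = 1
        · refine ⟨⟨v.val - 1, by omega⟩, ?_, ?_⟩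
          · rw [hmem]
            show ((v.val - 1) % 3 = 0 ∧ v.val - 1 + 1 < t) ∨ v.val - 1 = t - 2
            omega
          · rw [cyc_adj (by omega)]
            right
            show (v.val - 1 + 1) % t = v.val
            have e : v.val - 1 + 1 = v.val := by omega
            rw [e, Nat.mod_eq_of_lt hvlt]
        · by_cases h2 : v.val % 3 = 2
          · refine ⟨⟨v.val + 1, by omega⟩, ?_, ?_⟩
            · rw [hmem]
              show ((v.val + 1) % 3 = 0 ∧ v.val + 1 + 1 < t) ∨ v.val + 1 = t - 2
              omega
            · rw [cyc_adj (by omega)]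
              left
              show (v.val + 1) % t = v.val + 1
              exact Nat.mod_eq_of_lt (by omega)
          · -- v.val % 3 = 0, so v.val = t - 1
            refine ⟨⟨t - 2, by omega⟩, ?_, ?_⟩
            · rw [hmem]
              show ((t - 2) % 3 = 0 ∧ t - 2 + 1 < t) ∨ t - 2 = t - 2
              omega
            · rw [cyc_adj (by omega)]
              right
              show (t - 2 + 1) % t = v.val
              rw [Nat.mod_eq_of_lt (by omega)]
              have := hv1 (by omega)
              omega
    · apply ncard_range_fin
      intro i j hij
      have h2 := congrArg Fin.val hij
      simp only at h2
      have := i.isLt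
      have := j.isLt
      split_ifs at h2 <;> exact Fin.ext (by omega)
  · -- t ≢ 1 mod 3
    refine ⟨Set.range (fun i : Fin ((t + 2) / 3) =>
      (⟨3 * i.val, by have := i.isLt; omega⟩ : Fin t)), ?_, ?_⟩
    · have hmem : ∀ v : Fin t,
          (v ∈ Set.range (fun i : Fin ((t + 2) / 3) =>
            (⟨3 * i.val, by have := i.isLt; omega⟩ : Fin t)))
          ↔ v.val % 3 = 0 := by
        intro v
        constructor
        · rintro ⟨i, rfl⟩
          simp
        · intro h1
          have := v.isLt
          exact ⟨⟨v.val / 3, by omega⟩, by apply Fin.ext; simp; omega⟩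
      apply maxIndep_of
      · intro a ha b hb hadj
        rw [hmem] at ha hb
        rw [cyc_adj (by omega)] at hadj
        have ha2 := a.isLt
        have hb2 := b.isLt
        rcases hadj with h | h
        · rcases succ_mod_cases ha2 with ⟨h1, h2⟩ | ⟨h1, h2⟩ <;> omega
        · rcases succ_mod_cases hb2 with ⟨h1, h2⟩ | ⟨h1, h2⟩ <;> omega
      · intro v hv
        rw [hmem] at hv
        have hvlt := v.isLt
        by_cases h1 : v.val % 3 = 1
        · refine ⟨⟨v.val - 1, by omega⟩, ?_, ?_⟩
          · rw [hmem]
            show (v.val - 1) % 3 = 0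
            omega
          · rw [cyc_adj (by omega)]
            right
            show (v.val - 1 + 1) % t = v.val
            have e : v.val - 1 + 1 = v.val := by omega
            rw [e, Nat.mod_eq_of_lt hvlt]
        · have h2 : v.val % 3 = 2 := by omega
          by_cases h3 : v.val + 1 < t
          · refine ⟨⟨v.val + 1, by omega⟩, ?_, ?_⟩
            · rw [hmem]
              show (v.val + 1) % 3 = 0
              omega
            · rw [cyc_adj (by omega)]
              left
              show (v.val + 1) % t = v.val + 1
              exact Nat.mod_eq_of_lt h3
          · refine ⟨⟨0, by omega⟩, ?_, ?_⟩
            · rw [hmem]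
              show 0 % 3 = 0
              rfl
            · rw [cyc_adj (by omega)]
              left
              show (v.val + 1) % t = 0
              have e : v.val + 1 = t := by omega
              rw [e, Nat.mod_self]
    · apply ncard_range_fin
      intro i j hij
      have h2 : 3 * i.val = 3 * j.val := congrArg Fin.val hij
      exact Fin.ext (by omega)

/-- If `t ≥ 3` and the cycle `C_t` is unmixed and triangle-free, then
`t ∈ {4, 5, 7}`. -/
theorem cycle_unmixed_triangleFree (t : ℕ) (ht : 3 ≤ t)
    (hu : Unmixed (SimpleGraph.cycleGraph t))
    (htf : (SimpleGraph.cycleGraph t).CliqueFree 3) :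
    t ∈ ({4, 5, 7} : Set ℕ) := by
  by_contra hmem
  simp only [Set.mem_insert_iff, Set.mem_singleton_iff] at hmem
  push_neg at hmem
  rcases Nat.lt_or_ge t 4 with h3 | h4
  · have ht3 : t = 3 := by omega
    subst ht3
    exact htf {0, 1, 2}
      (SimpleGraph.is3Clique_triple_iff.mpr ⟨by decide, by decide, by decide⟩)
  · obtain ⟨A, hA, hAc⟩ := bigIndep t ht
    obtain ⟨B, hB, hBc⟩ := smallIndep t (by omega)
    have := hu A B hA hB
    omega
end
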